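/- Let U ⊆ ℂ be open and symmetric with respect to the real axis (U = {conj z : z ∈ U}), and let g be holomorphic on U with conj(g(conj z)) = g(z) for all z ∈ U and Re g(z) > 0 for all z ∈ U. Then there exists a holomorphic function h on U such that g(z) = h(z) · conj(h(conj z)) for all z ∈ U. -/
import Mathlib


open ComplexConjugate

/-- Factorization `g = h · h*` used in the paper to renormalize the basis near the
cross: a holomorphic function `g` on a conjugation-symmetric open set `U`, with
`g* = g` and `Re g > 0`, can be written `g(z) = h(z) · conj(h(conj z))` for some
holomorphic `h` on `U`. -/
theorem stmt_16 (U : Set ℂ) (hUopen : IsOpen U)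
    (hsym : ∀ z : ℂ, z ∈ U ↔ conj z ∈ U)
    (g : ℂ → ℂ) (hg : DifferentiableOn ℂ g U)
    (hgsym : ∀ z ∈ U, conj (g (conj z)) = g z)
    (hre : ∀ z ∈ U, 0 < (g z).re) :
    ∃ h : ℂ → ℂ, DifferentiableOn ℂ h U ∧
      ∀ z ∈ U, g z = h z * conj (h (conj z)) := by
  refine ⟨fun z => Complex.exp (Complex.log (g z) / 2), ?_, ?_⟩
  · intro z hz
    have hslit : g z ∈ Complex.slitPlane := Or.inl (hre z hz)
    have h1 : DifferentiableWithinAt ℂ (fun w => Complex.log (g w)) U z :=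
      DifferentiableAt.comp_differentiableWithinAt z (Complex.differentiableAt_log hslit) (hg z hz)
    exact ((h1.div_const 2).cexp)
  · intro z hz
    have hz' : conj z ∈ U := (hsym z).1 hz
    have hne : g z ≠ 0 := fun h => (hre z hz).ne (by simp [h])
    have harg : (g (conj z)).arg ≠ Real.pi := by
      have := hre _ hz'
      intro h
      have := Complex.arg_eq_pi_iff.mp h
      linarith [this.1]
    have hc : conj (Complex.log (g (conj z))) = Complex.log (g z) := by
      rw [← Complex.log_conj _ harg, hgsym z hz]
    rw [← Complex.exp_conj, map_div₀, hc, ← Complex.exp_add]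
    have h2 : (starRingEnd ℂ) 2 = 2 := Complex.conj_ofNat 2
    rw [h2]
    have : Complex.log (g z) / 2 + Complex.log (g z) / 2 = Complex.log (g z) := by ring
    rw [this, Complex.exp_log hne]
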